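/- arXiv:1605.03748 — 2 statements merged into one kernel-verified Lean document; each statement's English description precedes it below -/
import Mathlib

section
/- As formal Laurent series in s, one has 1/((1 - e^s)(1 - e^{-2s})) = -(1/2)(d/ds)(1/(1 - e^s)) + (1/2)·1/(1 - e^{-2s}) - (1/2)·1/(1 - e^{-s}). -/
open PowerSeries

lemma my_derivative_exp : PowerSeries.derivative ℚ (exp ℚ) = exp ℚ := by
  ext n
  rw [coeff_derivative, coeff_exp, coeff_exp, Nat.factorial_succ]
  have h1 : ((n+1 : ℕ) : ℚ) ≠ 0 := by positivity
  have h2 : ((n.factorial : ℕ) : ℚ) ≠ 0 := by positivity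
  simp only [map_div₀, map_one, map_natCast, Algebra.algebraMap_self, RingHom.id_apply]
  push_cast
  field_simp

/-- The Laurent series identity
`1/((1-e^s)(1-e^{-2s})) = -(1/2)(d/ds)(1/(1-e^s)) + (1/2)/(1-e^{-2s}) - (1/2)/(1-e^{-s})`,
multiplied through by `s²` to give an identity of formal power series: writing
`F = s/(1-e^s)` (so `1/(1-e^{cs}) = (rescale c F)/(cs)`) and
`G = s²/((1-e^s)(1-e^{-2s}))`, the identity becomes
`G = (1/2)(F - s F') - (1/4) s·(rescale (-2) F) + (1/2) s·(rescale (-1) F)`. -/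
theorem laurent_beta_two_identity (F G : PowerSeries ℚ)
    (hF : F * (1 - PowerSeries.exp ℚ) = PowerSeries.X)
    (hG : G * ((1 - PowerSeries.exp ℚ) *
        (1 - PowerSeries.rescale (-2) (PowerSeries.exp ℚ))) = PowerSeries.X ^ 2) :
    G = PowerSeries.C (R := ℚ) (1 / 2) * (F - PowerSeries.X * PowerSeries.derivative ℚ F)
      - PowerSeries.C (R := ℚ) (1 / 4) * (PowerSeries.X * PowerSeries.rescale (-2) F)
      + PowerSeries.C (R := ℚ) (1 / 2) * (PowerSeries.X * PowerSeries.rescale (-1) F) := by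
  set E := exp ℚ with hE
  set e := rescale (-1 : ℚ) E with he
  set E2 := rescale (-2 : ℚ) E with hE2
  set F1 := rescale (-1 : ℚ) F with hF1
  set F2 := rescale (-2 : ℚ) F with hF2
  set Fp := PowerSeries.derivative ℚ F with hFp
  set c := C (R := ℚ) (1/2 : ℚ) with hc
  set d := C (R := ℚ) (1/4 : ℚ) with hd
  have hC2 : (C (R := ℚ)) (2 : ℚ) = (2 : ℚ⟦X⟧) := map_ofNat _ 2
  have hC4 : (C (R := ℚ)) (4 : ℚ) = (4 : ℚ⟦X⟧) := map_ofNat _ 4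
  -- derivative relation
  have hde : PowerSeries.derivative ℚ (1 - E) = -E := by
    rw [hE, map_sub, Derivation.map_one_eq_zero, my_derivative_exp, zero_sub]
  have h2 : Fp * (1 - E) = 1 + F * E := by
    have h := congrArg (PowerSeries.derivative ℚ) hF
    rw [Derivation.leibniz, derivative_X, hde, smul_eq_mul, smul_eq_mul] at h
    linear_combination h
  -- rescale relations
  have h3 : F1 * (1 - e) = - X := by
    have h := congrArg (rescale (-1 : ℚ)) hF
    rw [map_mul, map_sub, map_one, rescale_X] at h
    rw [hF1, he, hE, h]
    simp
  have h4 : F2 * (1 - E2) = - 2 * X := by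
    have h := congrArg (rescale (-2 : ℚ)) hF
    rw [map_mul, map_sub, map_one, rescale_X] at h
    rw [hF2, hE2, hE, h, map_neg, hC2]
  have h5 : e * E = 1 := by
    rw [he, hE]
    have h := exp_mul_exp_eq_exp_add (-1 : ℚ) 1
    rw [rescale_one] at h
    norm_num [rescale_zero, constantCoeff_exp] at h
    simpa using h
  have h6 : e * e = E2 := by
    rw [he, hE, hE2, exp_mul_exp_eq_exp_add]
    norm_num
    rfl
  have hhalf : c * 2 = 1 := by
    rw [hc, ← hC2, ← map_mul]
    norm_num
  have hquarter : d * 4 = 1 := by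
    rw [hd, ← hC4, ← map_mul]
    norm_num
  have key : (c * (F - X * Fp) - d * (X * F2) + c * (X * F1)) * ((1 - E) * (1 - E2))
      = X ^ 2 := by
    linear_combination (c * (X*(1+e) + (1 - E2))) * hF - (c * X * (1 - E2)) * h2
      + (c * X * (1-E) * (1+e)) * h3 - (d * X * (1-E)) * h4
      + (c * (X*F + X*F*e + X^2)) * h5 + (c * (X*(1-E)*F1 - X*F*E)) * h6
      + (X^2*(2*d*E + 1 - 2*d)) * hhalf + (c*X^2*(1-E)) * hquarter
  have hD : ((1 - E) * (1 - E2)) ≠ 0 := by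
    apply mul_ne_zero
    · intro h
      have h' := congrArg (coeff (R := ℚ) 1) h
      rw [hE, map_sub, map_zero] at h'
      simp [coeff_exp] at h'
    · intro h
      have h' := congrArg (coeff (R := ℚ) 1) h
      rw [hE2, hE, map_sub, map_zero] at h'
      simp [coeff_rescale, coeff_exp] at h'
  exact mul_right_cancel₀ hD (by rw [hG, key])
end

section
/- Define χ_n(β) for n ≥ 1 by χ_n(β) = (n-1)! ∑_{k=0}^{n+2} ((-1)^{k-1} B_k B_{n+2-k})/(k!(n+2-k)!) β^{k - n/2 - 1}, with Bernoulli numbers in the convention s/(1-e^s) = -∑ B_m s^m/m!. Then at β = 1, χ_n(1) = 0 for n odd, and for n = 2g - 2 with g ≥ 2, χ_{2g-2}(1) = B_{2g}/(2g(2g-2)). -/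
/-- The parameterized Euler characters
`χ_n(β) = (n-1)! ∑_{k=0}^{n+2} ((-1)^{k-1} B_k B_{n+2-k})/(k!(n+2-k)!) β^{k-n/2-1}`
for `n ≥ 1`. -/
noncomputable def parEuler (B : ℕ → ℚ) (β : ℝ) (n : ℕ) : ℝ :=
  ((n - 1).factorial : ℝ) *
    ∑ k ∈ Finset.range (n + 3),
      (-1 : ℝ) ^ ((k : ℤ) - 1) * (B k : ℝ) * (B (n + 2 - k) : ℝ)
        / ((k.factorial : ℝ) * ((n + 2 - k).factorial : ℝ))
        * β ^ ((k : ℝ) - (n : ℝ) / 2 - 1)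

open PowerSeries Finset

lemma exp_sub_one_ne_zero : (exp ℚ - 1 : ℚ⟦X⟧) ≠ 0 := by
  intro h
  have := congrArg (coeff 1) h
  simp [coeff_exp] at this

lemma derivative_exp' : d⁄dX ℚ (exp ℚ) = exp ℚ := by
  ext n
  rw [coeff_derivative, coeff_exp, coeff_exp]
  simp only [Algebra.algebraMap_self, RingHom.id_apply]
  field_simp [Nat.factorial_succ]
  push_cast [Nat.factorial_succ]; ring

lemma psKey : bernoulli'PowerSeries ℚ * bernoulliPowerSeries ℚ
    = bernoulliPowerSeries ℚ - X * d⁄dX ℚ (bernoulliPowerSeries ℚ) := by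
  have h1 := bernoulli'PowerSeries_mul_exp_sub_one ℚ
  have h2 := bernoulliPowerSeries_mul_exp_sub_one ℚ
  have h3 : d⁄dX ℚ (bernoulliPowerSeries ℚ) * (exp ℚ - 1)
      + bernoulliPowerSeries ℚ * exp ℚ = 1 := by
    have := congrArg (d⁄dX ℚ) h2
    rw [Derivation.leibniz, derivative_X] at this
    rw [map_sub, derivative_exp'] at this
    simp only [smul_eq_mul, Derivation.map_one_eq_zero, sub_zero] at this
    linear_combination this
  apply mul_right_cancel₀ (mul_ne_zero exp_sub_one_ne_zero exp_sub_one_ne_zero)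
  linear_combination (bernoulliPowerSeries ℚ * (exp ℚ - 1)) * h1
    - (exp ℚ - 1) * h2 + (X * (exp ℚ - 1)) * h3

lemma keyQ (m : ℕ) (hm : 1 ≤ m) :
    ∑ k ∈ Finset.range (m + 1),
      bernoulli' k * bernoulli (m - k) / (k.factorial * (m - k).factorial)
    = (1 - (m : ℚ)) * bernoulli m / m.factorial := by
  have := congrArg (coeff m) psKey
  rw [coeff_mul, map_sub] at this
  obtain ⟨j, rfl⟩ := Nat.exists_eq_add_of_le hm
  rw [add_comm 1 j] at this ⊢
  rw [coeff_succ_X_mul, coeff_derivative] at this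
  simp only [bernoulli'PowerSeries, bernoulliPowerSeries, coeff_mk, Algebra.algebraMap_self,
    RingHom.id_apply] at this
  rw [Finset.Nat.sum_antidiagonal_eq_sum_range_succ_mk] at this
  rw [Nat.succ_eq_add_one] at this
  rw [show (1 - ((j+1 : ℕ) : ℚ)) * bernoulli (j+1) / (j+1).factorial
      = bernoulli (j + 1) / ((j+1).factorial : ℚ) - bernoulli (j + 1) / ((j+1).factorial : ℚ) * ((j : ℚ) + 1) by
    push_cast; ring, ← this]
  refine Finset.sum_congr rfl fun k hk => ?_
  simp only []
  field_simp

lemma B_eq (B : ℕ → ℚ)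
    (hB : (PowerSeries.mk fun m => -(B m / (m.factorial : ℚ))) *
        (1 - PowerSeries.exp ℚ) = PowerSeries.X) (m : ℕ) : B m = bernoulli m := by
  have hneg : (PowerSeries.mk fun m => -(B m / (m.factorial : ℚ)))
      = - PowerSeries.mk fun m => B m / (m.factorial : ℚ) := by
    ext n; simp
  have h2 : (PowerSeries.mk fun m => B m / (m.factorial : ℚ)) * (exp ℚ - 1) = X := by
    rw [hneg] at hB; linear_combination hB
  have h3 := bernoulliPowerSeries_mul_exp_sub_one ℚ
  have h4 : (PowerSeries.mk fun m => B m / (m.factorial : ℚ)) = bernoulliPowerSeries ℚ := by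
    apply mul_right_cancel₀ exp_sub_one_ne_zero
    rw [h2, h3]
  have := congrArg (coeff m) h4
  simp only [coeff_mk, bernoulliPowerSeries, Algebra.algebraMap_self, RingHom.id_apply] at this
  have hf : ((m.factorial : ℚ)) ≠ 0 := Nat.cast_ne_zero.mpr m.factorial_ne_zero
  field_simp at this
  exact this

lemma mainEval (B : ℕ → ℚ)
    (hB : (PowerSeries.mk fun m => -(B m / (m.factorial : ℚ))) *
        (1 - PowerSeries.exp ℚ) = PowerSeries.X) (n : ℕ) (hn : 1 ≤ n) :
    parEuler B 1 n = (bernoulli (n + 2) : ℝ) / ((n : ℝ) * ((n : ℝ) + 2)) := by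
  have hsum : ∑ k ∈ Finset.range (n + 3),
      (-1 : ℝ) ^ ((k : ℤ) - 1) * (B k : ℝ) * (B (n + 2 - k) : ℝ)
        / ((k.factorial : ℝ) * ((n + 2 - k).factorial : ℝ))
        * (1:ℝ) ^ ((k : ℝ) - (n : ℝ) / 2 - 1)
      = -((∑ k ∈ Finset.range (n + 2 + 1),
          bernoulli' k * bernoulli (n + 2 - k) / (k.factorial * (n + 2 - k).factorial) : ℚ) : ℝ) := by
    rw [show n + 2 + 1 = n + 3 from rfl, Rat.cast_sum, ← Finset.sum_neg_distrib]
    push_cast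
    refine Finset.sum_congr rfl fun k hk => ?_
    rw [Real.one_rpow, mul_one, B_eq B hB, B_eq B hB]
    have hz : (-1 : ℝ) ^ ((k : ℤ) - 1) = -((-1 : ℝ) ^ k) := by
      rw [zpow_sub₀ (by norm_num : (-1:ℝ) ≠ 0), zpow_natCast, zpow_one]
      field_simp
    have hb' : ((bernoulli' k : ℚ) : ℝ) = (-1:ℝ)^k * ((bernoulli k : ℚ) : ℝ) := by
      rw [bernoulli'_eq_bernoulli]; push_cast; ring
    rw [hz, hb']
    ring
  rw [parEuler, hsum, keyQ (n + 2) (by omega)]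
  obtain ⟨p, rfl⟩ := Nat.exists_eq_add_of_le hn
  have hfac : ((1 + p + 2).factorial : ℝ)
      = ((p + 3) : ℝ) * ((p + 2) : ℝ) * ((p + 1) : ℝ) * (p.factorial : ℝ) := by
    rw [show 1 + p + 2 = p + 3 from by omega]
    rw [Nat.factorial_succ, Nat.factorial_succ, Nat.factorial_succ]
    push_cast; ring
  rw [show 1 + p - 1 = p from by omega]
  push_cast [hfac]
  have h1 : (p.factorial : ℝ) ≠ 0 := Nat.cast_ne_zero.mpr p.factorial_ne_zero
  field_simp
  ring

/-- At `β = 1`: `χ_n(1) = 0` for `n` odd, and `χ_{2g-2}(1) = B_{2g}/(2g(2g-2))` for `g ≥ 2`,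
with Bernoulli numbers in the convention `s/(1-e^s) = -∑ B_m s^m/m!`. -/
theorem parEuler_unrefined (B : ℕ → ℚ)
    (hB : (PowerSeries.mk fun m => -(B m / (m.factorial : ℚ))) *
        (1 - PowerSeries.exp ℚ) = PowerSeries.X) :
    (∀ n, 1 ≤ n → Odd n → parEuler B 1 n = 0)
    ∧ ∀ g : ℕ, 2 ≤ g →
        parEuler B 1 (2 * g - 2)
          = (B (2 * g) : ℝ) / ((2 * g : ℝ) * ((2 * g : ℝ) - 2)) := by
  constructor
  · intro n hn hodd
    rw [mainEval B hB n hn,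
      bernoulli_eq_bernoulli'_of_ne_one (by omega),
      bernoulli'_eq_zero_of_odd (hodd.add_even even_two) (by omega)]
    simp
  · intro g hg
    have hn : 1 ≤ 2 * g - 2 := by omega
    rw [mainEval B hB _ hn, B_eq B hB, show 2 * g - 2 + 2 = 2 * g from by omega]
    have hc : ((2 * g - 2 : ℕ) : ℝ) = 2 * (g : ℝ) - 2 := by
      push_cast [Nat.cast_sub (by omega : 2 ≤ 2 * g)]
      ring
    rw [hc]
    push_cast
    congr 1
    ring
end
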